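/- Pull-back convergence of the logistic equation to its random equilibrium (Lemma 3.1, pathwise form): Let w : ℝ → ℝ be continuous with w(0) = 0 and w(−t)/t → 0 as t → +∞, and let x > 0. Then the integral I := ∫_{−∞}^{0} exp(rs + σ·w(s)) ds is finite, and the pull-back value G(t) := x·exp(rt − σ·w(−t)) / (1 + r·x·exp(rt − σ·w(−t))·∫_{−t}^{0} exp(rτ + σ·w(τ)) dτ) satisfies G(t) → 1/(r·I) as t → +∞. -/

import Mathlib

open Real Filter Topology MeasureTheory intervalIntegral

lemma aux_integrableOn_exp_mul_Iic {c : ℝ} (hc : 0 < c) (a : ℝ) :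
    IntegrableOn (fun s => Real.exp (c * s)) (Set.Iic a) := by
  have hcont : Continuous fun s : ℝ => Real.exp (c * s) :=
    Real.continuous_exp.comp (continuous_const.mul continuous_id)
  refine integrableOn_Iic_of_intervalIntegral_norm_bounded (Real.exp (c * a) / c) a
    (fun y => hcont.integrableOn_Ioc) tendsto_id ?_
  filter_upwards [eventually_le_atBot a] with y hy
  have hD : ∀ s ∈ Set.uIcc y a, HasDerivAt (fun u => Real.exp (c * u) / c)
      (Real.exp (c * s)) s := by
    intro s _
    have h1 : HasDerivAt (fun u : ℝ => c * u) c s := by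
      simpa using (hasDerivAt_id s).const_mul c
    have h2 := (Real.hasDerivAt_exp (c * s)).comp s h1
    have h3 := h2.div_const c
    simpa [mul_comm, mul_div_assoc, mul_div_cancel_left₀ _ hc.ne'] using h3
  have hint : IntervalIntegrable (fun s => Real.exp (c * s)) volume y a :=
    hcont.intervalIntegrable y a
  have := intervalIntegral.integral_eq_sub_of_hasDerivAt hD hint
  have hnorm : (fun s => ‖Real.exp (c * s)‖) = fun s => Real.exp (c * s) := by
    funext s; exact Real.norm_of_nonneg (Real.exp_pos _).le
  simp only [id_eq]
  rw [hnorm, this]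
  have : 0 ≤ Real.exp (c * y) / c := div_nonneg (Real.exp_pos _).le hc.le
  linarith

/-- **Pull-back convergence of the logistic equation to its random equilibrium**
(Lemma 3.1, pathwise form). If `w` is continuous with `w 0 = 0` and `w(-t)/t → 0`,
then `I = ∫_{-∞}^0 e^{rs + σ w(s)} ds` is finite and the pull-back value
`G(t) = x e^{rt - σ w(-t)} / (1 + r x e^{rt - σ w(-t)} ∫_{-t}^0 e^{rτ + σ w(τ)} dτ)`
converges to `1/(r I)` as `t → ∞`. -/
theorem logistic_pullback_convergence_random_equilibrium
    (r σ x : ℝ) (hr : 0 < r) (hx : 0 < x)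
    (w : ℝ → ℝ) (hw : Continuous w) (hw0 : w 0 = 0)
    (hwslow : Tendsto (fun t => w (-t) / t) atTop (𝓝 0)) :
    IntegrableOn (fun s => Real.exp (r * s + σ * w s)) (Set.Iic 0) ∧
    Tendsto (fun t : ℝ =>
        x * Real.exp (r * t - σ * w (-t)) /
          (1 + r * x * Real.exp (r * t - σ * w (-t)) *
            ∫ τ in (-t)..(0:ℝ), Real.exp (r * τ + σ * w τ)))
      atTop
      (𝓝 (1 / (r * ∫ s in Set.Iic (0:ℝ), Real.exp (r * s + σ * w s)))) := by
  set f : ℝ → ℝ := fun s => Real.exp (r * s + σ * w s) with hf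
  have hfc : Continuous f := Real.continuous_exp.comp (by continuity)
  -- sublinearity bound
  have hσslow : Tendsto (fun t => σ * (w (-t) / t)) atTop (𝓝 0) := by
    simpa using hwslow.const_mul σ
  have hbdd : ∀ᶠ t in atTop, |σ * (w (-t) / t)| ≤ r / 2 :=
    (hσslow.eventually (Metric.ball_mem_nhds 0 (half_pos hr))).mono fun t ht => by
      rw [Real.dist_0_eq_abs] at ht
      exact ht.le
  obtain ⟨M₀, hM₀⟩ := (hbdd.and (eventually_ge_atTop (1:ℝ))).exists_forall_of_atTop
  set M : ℝ := max M₀ 1 with hM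
  have hM1 : (1:ℝ) ≤ M := le_max_right _ _
  have hkey : ∀ s ≤ -M, r * s + σ * w s ≤ r / 2 * s := by
    intro s hs
    have ht : M₀ ≤ -s := le_trans (le_max_left _ _) (by linarith)
    obtain ⟨h1, _⟩ := hM₀ (-s) ht
    have hspos : 0 < -s := by linarith
    have hsne : s ≠ 0 := by linarith
    have : σ * (w (-(-s)) / (-s)) * (-s) = σ * w s := by
      rw [neg_neg, mul_assoc, div_mul_cancel₀ _ (neg_ne_zero.mpr hsne)]
    have hub : σ * w s ≤ r / 2 * (-s) := by
      rw [← this]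
      have := (abs_le.mp h1).2
      nlinarith [abs_nonneg (σ * (w (-(-s)) / (-s)))]
    nlinarith
  -- integrability
  have hInt : IntegrableOn f (Set.Iic 0) := by
    have h1 : IntegrableOn f (Set.Iic (-M)) := by
      refine (aux_integrableOn_exp_mul_Iic (half_pos hr) (-M)).mono' 
        (hfc.aestronglyMeasurable.restrict) ?_
      rw [ae_restrict_iff' measurableSet_Iic]
      refine ae_of_all _ fun s hs => ?_
      rw [Real.norm_of_nonneg (Real.exp_pos _).le]
      exact Real.exp_le_exp.mpr (hkey s hs)
    have h2 : IntegrableOn f (Set.Icc (-M) 0) := hfc.integrableOn_Icc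
    have hMle : -M ≤ (0:ℝ) := by linarith
    have := h1.union h2
    rwa [Set.Iic_union_Icc_eq_Iic hMle] at this
  refine ⟨hInt, ?_⟩
  set I : ℝ := ∫ s in Set.Iic (0:ℝ), f s with hI
  -- positivity of I
  have hIpos : 0 < I := by
    rw [hI, setIntegral_pos_iff_support_of_nonneg_ae
      (ae_of_all _ fun s => (Real.exp_pos _).le) hInt]
    have hsupp : Function.support f ∩ Set.Iic 0 = Set.Iic 0 := by
      ext s
      simp [Function.mem_support, hf, (Real.exp_pos (r * s + σ * w s)).ne']
    rw [hsupp, Real.volume_Iic]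
    exact ENNReal.zero_lt_top
  -- J(t) → I
  have hJ : Tendsto (fun t : ℝ => ∫ τ in (-t)..(0:ℝ), f τ) atTop (𝓝 I) :=
    intervalIntegral_tendsto_integral_Iic 0 hInt tendsto_neg_atTop_atBot
  -- E(t) → ∞
  have hE : Tendsto (fun t : ℝ => r * t - σ * w (-t)) atTop atTop := by
    have hcoef : Tendsto (fun t : ℝ => r - σ * (w (-t) / t)) atTop (𝓝 r) := by
      simpa using tendsto_const_nhds.sub hσslow
    have := hcoef.pos_mul_atTop hr tendsto_id
    refine this.congr' ?_
    filter_upwards [eventually_gt_atTop (0:ℝ)] with t ht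
    field_simp
    simp only [id]; ring
  have hxE : Tendsto (fun t : ℝ => x * Real.exp (r * t - σ * w (-t))) atTop atTop :=
    (tendsto_exp_atTop.comp hE).const_mul_atTop hx
  have hinv : Tendsto (fun t : ℝ => (x * Real.exp (r * t - σ * w (-t)))⁻¹) atTop (𝓝 0) :=
    hxE.inv_tendsto_atTop
  -- denominator tendsto
  have hD : Tendsto (fun t : ℝ =>
      (x * Real.exp (r * t - σ * w (-t)))⁻¹ + r * ∫ τ in (-t)..(0:ℝ), f τ)
      atTop (𝓝 (r * I)) := by
    have := hinv.add ((hJ.const_mul r))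
    simpa using this
  have hrI : r * I ≠ 0 := (mul_pos hr hIpos).ne'
  have hfinal : Tendsto (fun t : ℝ =>
      1 / ((x * Real.exp (r * t - σ * w (-t)))⁻¹ + r * ∫ τ in (-t)..(0:ℝ), f τ))
      atTop (𝓝 (1 / (r * I))) :=
    tendsto_const_nhds.div hD hrI
  refine hfinal.congr fun t => ?_
  set E : ℝ := x * Real.exp (r * t - σ * w (-t)) with hEdef
  set J : ℝ := ∫ τ in (-t)..(0:ℝ), f τ with hJdef
  have hEpos : 0 < E := mul_pos hx (Real.exp_pos _)
  have h1 : E⁻¹ + r * J = (1 + r * E * J) / E := by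
    field_simp
  have h2 : r * x * Real.exp (r * t - σ * w (-t)) * J = r * E * J := by
    rw [hEdef]; ring
  rw [h1, one_div_div, hEdef, h2]
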